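/- Let R be an algebraic complete idealic semiring. Then Spec R is quasi-compact, quasi-separated (the intersection of two quasi-compact opens is quasi-compact), and every open subset is a union of quasi-compact open subsets. -/

import Mathlib

open CompleteLattice

def IsPrimeElt {R : Type*} [LE R] [Mul R] [One R] (p : R) : Prop :=
  ¬ (1 : R) ≤ p ∧ ∀ a b : R, ¬ a ≤ p → ¬ b ≤ p → ¬ a * b ≤ p

def SpecT (R : Type*) [LE R] [Mul R] [One R] : Type _ := {p : R // IsPrimeElt p}

instance (R : Type*) [LE R] [Mul R] [One R] : TopologicalSpace (SpecT R) :=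
  TopologicalSpace.generateFrom {U : Set (SpecT R) | ∃ a : R, U = {p : SpecT R | ¬ a ≤ p.1}}

section Aux

variable {R : Type*} [CompleteLattice R] [CommMonoid R]

/-- The basic open set `D(a)`. -/
def Dset (a : R) : Set (SpecT R) := {p : SpecT R | ¬ a ≤ p.1}

lemma isOpen_Dset (a : R) : IsOpen (Dset a) :=
  TopologicalSpace.GenerateOpen.basic _ ⟨a, rfl⟩

lemma mul_sup' (hdist : ∀ (a : R) (S : Set R), a * sSup S = ⨆ b ∈ S, a * b)
    (a b c : R) : a * (b ⊔ c) = a * b ⊔ a * c := by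
  rw [← sSup_pair, hdist, iSup_pair]

lemma mul_mono (hdist : ∀ (a : R) (S : Set R), a * sSup S = ⨆ b ∈ S, a * b)
    (a : R) {b c : R} (h : b ≤ c) : a * b ≤ a * c := by
  have : a * c = a * b ⊔ a * c := by
    rw [← mul_sup' hdist, sup_eq_right.2 h]
  rw [this]; exact le_sup_left

lemma mul_le_left' (hdist : ∀ (a : R) (S : Set R), a * sSup S = ⨆ b ∈ S, a * b)
    (h1 : (1 : R) = ⊤) (a b : R) : a * b ≤ a := by
  calc a * b ≤ a * 1 := mul_mono hdist a (h1 ▸ le_top)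
  _ = a := mul_one a

lemma mul_le_right' (hdist : ∀ (a : R) (S : Set R), a * sSup S = ⨆ b ∈ S, a * b)
    (h1 : (1 : R) = ⊤) (a b : R) : a * b ≤ b := by
  rw [mul_comm]; exact mul_le_left' hdist h1 b a

lemma Dset_one : (Dset (1 : R)) = Set.univ := by
  ext p; simpa [Dset] using p.2.1

lemma Dset_mul (hdist : ∀ (a : R) (S : Set R), a * sSup S = ⨆ b ∈ S, a * b)
    (h1 : (1 : R) = ⊤) (a b : R) : Dset (a * b) = Dset a ∩ Dset b := by
  ext p
  constructor
  · intro h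
    exact ⟨fun ha => h ((mul_le_left' hdist h1 a b).trans ha),
      fun hb => h ((mul_le_right' hdist h1 a b).trans hb)⟩
  · rintro ⟨ha, hb⟩
    exact p.2.2 a b ha hb

lemma Dset_sSup (S : Set R) : Dset (sSup S) = ⋃ a ∈ S, Dset a := by
  ext p
  simp only [Dset, Set.mem_setOf_eq, Set.mem_iUnion, sSup_le_iff]
  push_neg
  tauto

lemma Dset_mono {a b : R} (h : a ≤ b) : Dset a ⊆ Dset b :=
  fun _ hp ha => hp (h.trans ha)

/-- The basic opens form a topological basis. -/
lemma isBasis_Dset (hdist : ∀ (a : R) (S : Set R), a * sSup S = ⨆ b ∈ S, a * b)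
    (h1 : (1 : R) = ⊤) : TopologicalSpace.IsTopologicalBasis
    {U : Set (SpecT R) | ∃ a : R, U = Dset a} := by
  refine ⟨?_, ?_, rfl⟩
  · rintro U ⟨a, rfl⟩ V ⟨b, rfl⟩ p hp
    exact ⟨Dset (a * b), ⟨a * b, rfl⟩, by rwa [Dset_mul hdist h1], le_of_eq (Dset_mul hdist h1 a b)⟩
  · apply Set.eq_univ_of_univ_subset
    rw [← Dset_one (R := R)]
    exact Set.subset_sUnion_of_mem ⟨1, rfl⟩

/-- Every open set is a union of basic opens with compact elements. -/
lemma open_eq_union_Dset (hdist : ∀ (a : R) (S : Set R), a * sSup S = ⨆ b ∈ S, a * b)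
    (h1 : (1 : R) = ⊤)
    (halg : ∀ a : R, a = sSup {x : R | IsCompactElement x ∧ x ≤ a})
    {U : Set (SpecT R)} (hU : IsOpen U) :
    ∃ T : Set R, (∀ a ∈ T, IsCompactElement a) ∧ U = ⋃ a ∈ T, Dset a := by
  obtain ⟨S, hS, rfl⟩ := (isBasis_Dset hdist h1).open_eq_sUnion hU
  refine ⟨{x : R | IsCompactElement x ∧ Dset x ⊆ ⋃₀ S}, fun a ha => ha.1, ?_⟩
  apply Set.Subset.antisymm
  · rintro p ⟨V, hV, hpV⟩
    obtain ⟨a, rfl⟩ := hS hV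
    have h2 : p ∈ Dset (sSup {x : R | IsCompactElement x ∧ x ≤ a}) := by
      rwa [← halg a]
    rw [Dset_sSup] at h2
    simp only [Set.mem_iUnion] at h2 ⊢
    obtain ⟨c, ⟨hc, hca⟩, hpc⟩ := h2
    exact ⟨c, ⟨hc, (Dset_mono hca).trans (Set.subset_sUnion_of_mem hV)⟩, hpc⟩
  · simp only [Set.iUnion_subset_iff]
    exact fun a ha => ha.2

lemma prime_pow_not_le {p : SpecT R} {c : R} (hc : ¬ c ≤ p.1) : ∀ n : ℕ, ¬ c ^ n ≤ p.1 := by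
  intro n
  induction n with
  | zero => simpa using p.2.1
  | succ n ih => rw [pow_succ]; exact p.2.2 _ _ ih hc

/-- Existence of primes avoiding powers of c. -/
lemma exists_prime_above (hdist : ∀ (a : R) (S : Set R), a * sSup S = ⨆ b ∈ S, a * b)
    (h1 : (1 : R) = ⊤)
    (c s : R) (hs : ∀ n : ℕ, ¬ c ^ n ≤ s)
    (hcpt : ∀ n : ℕ, IsCompactElement (c ^ n)) :
    ∃ p : SpecT R, s ≤ p.1 ∧ ¬ c ≤ p.1 := by
  set T : Set R := {x | s ≤ x ∧ ∀ n : ℕ, ¬ c ^ n ≤ x} with hT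
  obtain ⟨m, hsm, hmT, hmax⟩ := zorn_le_nonempty₀ T (fun C hCT hC y hy => by
    refine ⟨sSup C, ⟨le_trans (hCT hy).1 (le_sSup hy), fun n hn => ?_⟩, fun z hz => le_sSup hz⟩
    obtain ⟨x, hxC, hx⟩ := (isCompactElement_iff_le_of_directed_sSup_le R (c ^ n)).1 (hcpt n) C
      ⟨y, hy⟩ hC.directedOn hn
    exact (hCT hxC).2 n hx) s ⟨le_rfl, hs⟩
  have hprime : IsPrimeElt m := by
    constructor
    · have := hmT.2 0; simpa using this
    · intro a b ha hb hab
      have key : ∀ x : R, ¬ x ≤ m → ∃ n : ℕ, c ^ n ≤ m ⊔ x := by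
        intro x hx
        by_contra hno
        push_neg at hno
        have hmem : m ⊔ x ∈ T := ⟨hmT.1.trans le_sup_left, hno⟩
        have := hmax hmem le_sup_left
        exact hx (le_sup_right.trans this)
      obtain ⟨k, hk⟩ := key a ha
      obtain ⟨l, hl⟩ := key b hb
      apply hmT.2 (k + l)
      have step1 : c ^ k * c ^ l ≤ c ^ k * (m ⊔ b) := mul_mono hdist _ hl
      have step2 : c ^ k * (m ⊔ b) ≤ (m ⊔ a) * (m ⊔ b) := by
        rw [mul_comm (c ^ k), mul_comm (m ⊔ a)]
        exact mul_mono hdist _ hk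
      have step3 : (m ⊔ a) * (m ⊔ b) ≤ m := by
        rw [mul_sup' hdist, mul_comm (m ⊔ a) m, mul_comm (m ⊔ a) b,
          mul_sup' hdist, mul_sup' hdist]
        refine sup_le (sup_le ?_ ?_) (sup_le ?_ ?_)
        · exact mul_le_left' hdist h1 m m
        · exact mul_le_left' hdist h1 m a
        · exact mul_le_right' hdist h1 b m
        · rw [mul_comm]; exact hab
      calc c ^ (k + l) = c ^ k * c ^ l := pow_add c k l
        _ ≤ m := step1.trans (step2.trans step3)
  refine ⟨⟨m, hprime⟩, hmT.1, fun hcm => hmT.2 1 (by simpa using hcm)⟩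

lemma pow_compact (htop : IsCompactElement (1 : R))
    (hmulcpt : ∀ a b : R, IsCompactElement a → IsCompactElement b → IsCompactElement (a * b))
    {c : R} (hc : IsCompactElement c) : ∀ n : ℕ, IsCompactElement (c ^ n) := by
  intro n
  induction n with
  | zero => simpa using htop
  | succ n ih => rw [pow_succ]; exact hmulcpt _ _ ih hc

/-- D(c) is compact for compact c. -/
lemma isCompact_Dset (hdist : ∀ (a : R) (S : Set R), a * sSup S = ⨆ b ∈ S, a * b)
    (h1 : (1 : R) = ⊤)
    (halg : ∀ a : R, a = sSup {x : R | IsCompactElement x ∧ x ≤ a})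
    (htop : IsCompactElement (1 : R))
    (hmulcpt : ∀ a b : R, IsCompactElement a → IsCompactElement b → IsCompactElement (a * b))
    {c : R} (hc : IsCompactElement c) : IsCompact (Dset c) := by
  rw [isCompact_iff_finite_subcover]
  intro ι U hUo hcov
  classical
  have hBi : ∀ i, ∃ T : Set R, (∀ a ∈ T, IsCompactElement a) ∧ U i = ⋃ a ∈ T, Dset a :=
    fun i => open_eq_union_Dset hdist h1 halg (hUo i)
  choose T hTc hTU using hBi
  set A : Set R := ⋃ i, T i with hA
  have hpow : ∃ n : ℕ, c ^ n ≤ sSup A := by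
    by_contra hno
    push_neg at hno
    obtain ⟨p, hps, hpc⟩ := exists_prime_above hdist h1 c (sSup A) hno
      (pow_compact htop hmulcpt hc)
    obtain ⟨i, hpi⟩ := Set.mem_iUnion.1 (hcov hpc)
    rw [hTU i] at hpi
    simp only [Set.mem_iUnion] at hpi
    obtain ⟨a, haT, hpa⟩ := hpi
    exact hpa ((le_sSup (Set.mem_iUnion.2 ⟨i, haT⟩)).trans hps)
  obtain ⟨n, hn⟩ := hpow
  obtain ⟨t, htA, htle⟩ := (isCompactElement_iff_exists_le_sSup_of_le_sSup R _).1
    (pow_compact htop hmulcpt hc n) A hn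
  have hsel : ∀ a : R, a ∈ t → ∃ i, a ∈ T i := fun a ha => Set.mem_iUnion.1 (htA ha)
  choose f hf using hsel
  refine ⟨t.attach.image (fun a => f a.1 a.2), ?_⟩
  intro p hp
  have hpn : p ∈ Dset (c ^ n) := prime_pow_not_le hp n
  have hps : p ∈ Dset (t.sup id) := Dset_mono htle hpn
  have h2 : ∃ a ∈ t, ¬ (id a ≤ p.1) := by
    by_contra hcon
    push_neg at hcon
    exact hps (Finset.sup_le hcon)
  obtain ⟨a, hat, hpa⟩ := h2
  refine Set.mem_iUnion.2 ⟨f a hat, Set.mem_iUnion.2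
    ⟨Finset.mem_image.2 ⟨⟨a, hat⟩, Finset.mem_attach _ _, rfl⟩, ?_⟩⟩
  rw [hTU (f a hat)]
  exact Set.mem_iUnion.2 ⟨a, Set.mem_iUnion.2 ⟨hf a hat, hpa⟩⟩

/-- A quasi-compact open is D(c) for compact c. -/
lemma compact_open_eq_Dset (hdist : ∀ (a : R) (S : Set R), a * sSup S = ⨆ b ∈ S, a * b)
    (h1 : (1 : R) = ⊤)
    (halg : ∀ a : R, a = sSup {x : R | IsCompactElement x ∧ x ≤ a})
    {U : Set (SpecT R)} (hUo : IsOpen U) (hUc : IsCompact U) :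
    ∃ c : R, IsCompactElement c ∧ U = Dset c := by
  obtain ⟨T, hTc, rfl⟩ := open_eq_union_Dset hdist h1 halg hUo
  obtain ⟨t, ht⟩ := hUc.elim_finite_subcover (fun a : T => Dset a.1)
    (fun a => isOpen_Dset a.1) (by
      intro p hp
      simp only [Set.mem_iUnion] at hp ⊢
      obtain ⟨a, haT, hpa⟩ := hp
      exact ⟨⟨a, haT⟩, hpa⟩)
  refine ⟨t.sup (fun a => a.1), isCompactElement_finsetSup _ (fun x _ => hTc _ x.2), ?_⟩
  apply Set.Subset.antisymm
  · intro p hp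
    obtain ⟨a, hpa⟩ := Set.mem_iUnion.1 (ht hp)
    simp only [Set.mem_iUnion] at hpa
    obtain ⟨hat, hpa⟩ := hpa
    exact fun h => hpa ((Finset.le_sup (f := fun a : T => (a : R)) hat).trans h)
  · intro p hp
    have h2 : ∃ a ∈ t, ¬ ((a : T).1 ≤ p.1) := by
      by_contra hcon
      push_neg at hcon
      exact hp (Finset.sup_le hcon)
    obtain ⟨a, _, haq⟩ := h2
    exact Set.mem_iUnion.2 ⟨a.1, Set.mem_iUnion.2 ⟨a.2, haq⟩⟩

end Aux

/-- For an algebraic complete idealic semiring `R`, the space `Spec R` is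
quasi-compact, quasi-separated (intersections of quasi-compact opens are quasi-compact),
and every open subset is a union of quasi-compact open subsets. -/
theorem stmt15 {R : Type*} [CompleteLattice R] [CommMonoid R]
    (hdist : ∀ (a : R) (S : Set R), a * sSup S = ⨆ b ∈ S, a * b)
    (h1 : (1 : R) = ⊤)
    (halg : ∀ a : R, a = sSup {x : R | IsCompactElement x ∧ x ≤ a})
    (htop : IsCompactElement (1 : R))
    (hmulcpt : ∀ a b : R, IsCompactElement a → IsCompactElement b → IsCompactElement (a * b)) :
    CompactSpace (SpecT R) ∧
    (∀ U V : Set (SpecT R), IsOpen U → IsCompact U → IsOpen V → IsCompact V →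
      IsCompact (U ∩ V)) ∧
    (∀ U : Set (SpecT R), IsOpen U →
      ∃ 𝒰 : Set (Set (SpecT R)), (∀ W ∈ 𝒰, IsOpen W ∧ IsCompact W) ∧ U = ⋃₀ 𝒰) := by
  refine ⟨?_, ?_, ?_⟩
  · constructor
    rw [← Dset_one (R := R)]
    exact isCompact_Dset hdist h1 halg htop hmulcpt htop
  · intro U V hUo hUc hVo hVc
    obtain ⟨c, hc, rfl⟩ := compact_open_eq_Dset hdist h1 halg hUo hUc
    obtain ⟨d, hd, rfl⟩ := compact_open_eq_Dset hdist h1 halg hVo hVc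
    rw [← Dset_mul hdist h1]
    exact isCompact_Dset hdist h1 halg htop hmulcpt (hmulcpt _ _ hc hd)
  · intro U hUo
    obtain ⟨T, hTc, rfl⟩ := open_eq_union_Dset hdist h1 halg hUo
    refine ⟨(fun a => Dset a) '' T, ?_, ?_⟩
    · rintro W ⟨a, haT, rfl⟩
      exact ⟨isOpen_Dset a, isCompact_Dset hdist h1 halg htop hmulcpt (hTc a haT)⟩
    · rw [Set.sUnion_image]
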